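/- Assume 𝔽 has more than 3 elements and the identity x²x² = x³x holds for all x ∈ A. Then for all x, y, w ∈ A: (1) 4x²(xy) = x³y + x(x²y) + 2x(x(xy)); and (2) 8(xy)(xw) + 4x²(yw) = (x²y)w + (x²w)y + 2(x(xy))w + 2(x(xw))y + 2x((xy)w) + 2x((xw)y) + 2x(x(yw)). -/

import Mathlib

/-- `A_λ(e)`-based definition of a half-axis in a commutative non-associative `F`-algebra `A`:
`e` is idempotent, `A_1(e) = F e`, `A = F e ⊕ A_{1/2}(e) ⊕ A_0(e)`, and the fusion rules
`Z Z ⊆ Z`, `U U ⊆ F e + Z`, `U Z ⊆ U` hold, where `U = A_{1/2}(e)` and `Z = A_0(e)`. -/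
structure IsHalfAxis (F : Type*) [Field F] {A : Type*} [NonUnitalNonAssocCommRing A]
    [Module F A] [SMulCommClass F A A] [IsScalarTower F A A] (e : A) : Prop where
  idem : e * e = e
  eig_one : {y : A | e * y = y} = {y : A | ∃ c : F, y = c • e}
  decomp : ∀ x : A, ∃ (c : F) (u z : A),
      e * u = (2⁻¹ : F) • u ∧ e * z = 0 ∧ x = c • e + u + z
  indep : ∀ (c : F) (u z : A), e * u = (2⁻¹ : F) • u → e * z = 0 →
      c • e + u + z = 0 → c = 0 ∧ u = 0 ∧ z = 0
  fusionZZ : ∀ z z' : A, e * z = 0 → e * z' = 0 → e * (z * z') = 0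
  fusionUU : ∀ u u' : A, e * u = (2⁻¹ : F) • u → e * u' = (2⁻¹ : F) • u' →
      ∃ (c : F) (z : A), e * z = 0 ∧ u * u' = c • e + z
  fusionUZ : ∀ u z : A, e * u = (2⁻¹ : F) • u → e * z = 0 →
      e * (u * z) = (2⁻¹ : F) • (u * z)

lemma exC_stmt3 {F : Type*} [Field F] (hF : 3 < Cardinal.mk F) :
    ∃ c : F, c ≠ 0 ∧ c ≠ 1 ∧ c ≠ -1 := by
  by_contra hc
  push_neg at hc
  have hsub : (Set.univ : Set F) = {0, 1, -1} := by
    ext c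
    simp only [Set.mem_univ, Set.mem_insert_iff, Set.mem_singleton_iff, true_iff]
    rcases eq_or_ne c 0 with h | h
    · exact Or.inl h
    rcases eq_or_ne c 1 with h' | h'
    · exact Or.inr (Or.inl h')
    · exact Or.inr (Or.inr (hc c h h'))
  have hle : Cardinal.mk F ≤ 3 := by
    calc Cardinal.mk F = Cardinal.mk (Set.univ : Set F) := Cardinal.mk_univ.symm
      _ = Cardinal.mk ({0, 1, -1} : Set F) := by rw [hsub]
      _ ≤ Cardinal.mk ({1, -1} : Set F) + 1 := Cardinal.mk_insert_le
      _ ≤ (Cardinal.mk ({-1} : Set F) + 1) + 1 :=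
          add_le_add_left Cardinal.mk_insert_le 1
      _ ≤ (1 + 1) + 1 :=
          add_le_add_left (add_le_add_left (le_of_eq (Cardinal.mk_singleton _)) 1) 1
      _ = 3 := by norm_num
  exact absurd hF (not_lt.mpr hle)

lemma key_stmt3 {F : Type*} [Field F] {A : Type*} [NonUnitalNonAssocCommRing A]
    [Module F A] [SMulCommClass F A A] [IsScalarTower F A A]
    (hid1 : ∀ x : A, (x * x) * (x * x) = ((x * x) * x) * x) (t : F) (x y : A) :
    t • ((4:F) • (x*x*(x*y)) - y*(x*(x*x)) - x*(y*(x*x)) - (2:F) • (x*(x*(x*y))))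
    + (t*t) • ((4:F) • ((x*y)*(x*y)) + (2:F) • (x*x*(y*y)) - y*(y*(x*x))
        - (2:F) • (y*(x*(x*y))) - (2:F) • (x*(y*(x*y))) - x*(x*(y*y)))
    + (t*t*t) • ((4:F) • ((x*y)*(y*y)) - (2:F) • (y*(y*(x*y))) - y*(x*(y*y)) - x*(y*(y*y)))
    = 0 := by
  have h := hid1 (x + t • y)
  have hx := hid1 x
  have hy := hid1 y
  simp only [add_mul, mul_add, smul_mul_assoc, mul_smul_comm, smul_smul, mul_comm] at h hx hy
  linear_combination (norm := module) h - hx - (t*t*(t*t)) • hy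

lemma solve_stmt3 {F : Type*} [Field F] {A : Type*} [AddCommGroup A] [Module F A]
    (h2 : (2 : F) ≠ 0) (hF : 3 < Cardinal.mk F) (q1 q2 q3 : A)
    (hk : ∀ t : F, t • q1 + (t*t) • q2 + (t*t*t) • q3 = 0) : q1 = 0 ∧ q2 = 0 := by
  obtain ⟨c, hc0, hc1, hcm⟩ := exC_stmt3 hF
  have k1 := hk 1
  have k2 := hk (-1)
  have kc := hk c
  have hq2 : (2:F) • q2 = 0 := by linear_combination (norm := module) k1 + k2
  have hq2' : q2 = 0 := by
    rcases smul_eq_zero.mp hq2 with h | h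
    · exact absurd h h2
    · exact h
  have hq1s : (c - c*c*c) • q1 = 0 := by
    linear_combination (norm := module) kc - (c*c*c : F) • k1 - (c*c - c*c*c : F) • hq2'
  have hcc : c - c*c*c ≠ 0 := by
    have : c - c*c*c = c * (1 - c) * (1 + c) := by ring
    rw [this]
    exact mul_ne_zero (mul_ne_zero hc0 (sub_ne_zero.mpr (Ne.symm hc1)))
      (fun h => hcm (by linear_combination h))
  have hq1 : q1 = 0 := by
    rcases smul_eq_zero.mp hq1s with h | h
    · exact absurd h hcc
    · exact h
  exact ⟨hq1, hq2'⟩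

theorem stmt3 {F : Type*} [Field F] {A : Type*} [NonUnitalNonAssocCommRing A]
    [Module F A] [SMulCommClass F A A] [IsScalarTower F A A]
    (h2 : (2 : F) ≠ 0) (hF : 3 < Cardinal.mk F)
    (hid1 : ∀ x : A, (x * x) * (x * x) = ((x * x) * x) * x) :
    ∀ x y w : A,
      ((4 : F) • ((x * x) * (x * y)) =
        ((x * x) * x) * y + x * ((x * x) * y) + (2 : F) • (x * (x * (x * y)))) ∧
      ((8 : F) • ((x * y) * (x * w)) + (4 : F) • ((x * x) * (y * w)) =
        ((x * x) * y) * w + ((x * x) * w) * y + (2 : F) • ((x * (x * y)) * w) +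
          (2 : F) • ((x * (x * w)) * y) + (2 : F) • (x * ((x * y) * w)) +
          (2 : F) • (x * ((x * w) * y)) + (2 : F) • (x * (x * (y * w)))) := by
  have hQ : ∀ x y : A,
      ((4:F) • (x*x*(x*y)) - y*(x*(x*x)) - x*(y*(x*x)) - (2:F) • (x*(x*(x*y))) = 0) ∧
      ((4:F) • ((x*y)*(x*y)) + (2:F) • (x*x*(y*y)) - y*(y*(x*x))
        - (2:F) • (y*(x*(x*y))) - (2:F) • (x*(y*(x*y))) - x*(x*(y*y)) = 0) := by
    intro x y
    exact solve_stmt3 h2 hF _ _ _ (fun t => key_stmt3 hid1 t x y)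
  intro x y w
  constructor
  · have h1 := (hQ x y).1
    simp only [mul_comm] at h1 ⊢
    linear_combination (norm := module) h1
  · have hA := (hQ x (y + w)).2
    have hB := (hQ x y).2
    have hC := (hQ x w).2
    simp only [mul_add, add_mul, smul_add, mul_comm] at hA hB hC ⊢
    linear_combination (norm := module) hA - hB - hC
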